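/- If the maximal safe set S for parameters (𝔘, β) satisfies f(S) + β = S + 𝔘 (the 'tight' case, which holds at 𝔘 = u_min(β) when it is not a split bifurcation), then for every δ > 0, S is also a safe set for parameters (𝔘 + δ, β + δ). Consequently u_min(β₀ + δ) ≤ u_min(β₀) + δ. -/
import Mathlib


/-- The closed `u`-thickening of a set `X ⊆ ℝ`. -/
def thick (X : Set ℝ) (u : ℝ) : Set ℝ := {y : ℝ | ∃ x ∈ X, |y - x| ≤ u}

/-- `S` is a safe set in `Q` for control bound `𝔘` and disturbance bound `β`. -/
def SafeSet (f : ℝ → ℝ) (Q : Set ℝ) (𝔘 β : ℝ) (S : Set ℝ) : Prop :=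
  S ⊆ Q ∧ thick (f '' S) β ⊆ thick S 𝔘

/-- The maximal safe set: the union of all safe sets in `Q`. -/
def maxSafe (f : ℝ → ℝ) (Q : Set ℝ) (𝔘 β : ℝ) : Set ℝ :=
  ⋃₀ {S | SafeSet f Q 𝔘 β S}

/-- The minimum control bound for which a nonempty safe set exists. -/
noncomputable def uMin (f : ℝ → ℝ) (Q : Set ℝ) (β : ℝ) : ℝ :=
  sInf {u : ℝ | 0 < u ∧ ∃ S : Set ℝ, S.Nonempty ∧ SafeSet f Q u β S}

lemma thick_split {X : Set ℝ} {a b : ℝ} (ha : 0 ≤ a) (hb : 0 ≤ b) :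
    thick X (a + b) ⊆ thick (thick X a) b := by
  rintro y ⟨x, hx, hxy⟩
  rw [abs_le] at hxy
  refine ⟨y - max (-b) (min b (y - x)), ⟨x, hx, ?_⟩, ?_⟩ <;>
    rw [abs_le] <;>
    constructor <;>
    simp only [max_def, min_def] <;>
    split_ifs <;>
    linarith [hxy.1, hxy.2]

lemma thick_thick {X : Set ℝ} {a b : ℝ} :
    thick (thick X a) b ⊆ thick X (a + b) := by
  rintro y ⟨z, ⟨x, hx, hzx⟩, hyz⟩
  exact ⟨x, hx, by
    calc |y - x| = |(y - z) + (z - x)| := by ring_nf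
    _ ≤ |y - z| + |z - x| := abs_add_le _ _
    _ ≤ a + b := by linarith⟩

theorem tight_safe_set_gives_uMin_slope_one (f : ℝ → ℝ) (Q : Set ℝ) (𝔘 β : ℝ)
    (hf : Continuous f) (hQ : IsCompact Q) (h𝔘 : 0 < 𝔘) (h𝔘β : 𝔘 < β)
    (S : Set ℝ) (hS : S = maxSafe f Q 𝔘 β) (hSne : S.Nonempty)
    (htight : thick (f '' S) β = thick S 𝔘) (h𝔘min : 𝔘 = uMin f Q β) :
    (∀ δ > (0:ℝ), SafeSet f Q (𝔘 + δ) (β + δ) S) ∧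
    (∀ δ > (0:ℝ), uMin f Q (β + δ) ≤ uMin f Q β + δ) := by
  have hSQ : S ⊆ Q := by
    rw [hS]
    rintro x ⟨T, hT, hxT⟩
    exact hT.1 hxT
  have hsafe : ∀ δ > (0:ℝ), SafeSet f Q (𝔘 + δ) (β + δ) S := by
    intro δ hδ
    refine ⟨hSQ, ?_⟩
    intro y hy
    have h1 : y ∈ thick (thick (f '' S) β) δ :=
      thick_split (le_of_lt (h𝔘.trans h𝔘β)) (le_of_lt hδ) hy
    rw [htight] at h1
    exact thick_thick h1
  refine ⟨hsafe, fun δ hδ => ?_⟩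
  rw [← h𝔘min]
  unfold uMin
  apply csInf_le
  · exact ⟨0, fun u hu => le_of_lt hu.1⟩
  · exact ⟨by linarith, S, hSne, hsafe δ hδ⟩
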